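/- Let Ẑ_σ : H⊕H → H⊕H denote the operator (v₀, v₁) ↦ (v₀, −v₁) (the action of σ_Z ⊗ 1 under the identification ℂ²⊗H ≅ H⊕H). Then for every linear operator Z on H and every vector ψ ∈ H, ‖V Z ψ − Ẑ_σ V ψ‖ = ‖(Z − Z̃)ψ‖. -/

import Mathlib

/-- The projection `P⁰ = (1 + Z̃)/2`. -/
noncomputable def Pb0 {H : Type*} [AddCommGroup H] [Module ℂ H]
    (Zt : H →ₗ[ℂ] H) : H →ₗ[ℂ] H := ((1 : ℂ) / 2) • (1 + Zt)

/-- The projection `P¹ = (1 − Z̃)/2`. -/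
noncomputable def Pb1 {H : Type*} [AddCommGroup H] [Module ℂ H]
    (Zt : H →ₗ[ℂ] H) : H →ₗ[ℂ] H := ((1 : ℂ) / 2) • (1 - Zt)

/-- The SWAP-gate map `V : H → H⊕H`, `Vψ = (P⁰ψ, X̃P¹ψ)`. -/
noncomputable def VL {H : Type*} [AddCommGroup H] [Module ℂ H]
    (Zt Xt : H →ₗ[ℂ] H) : H →ₗ[ℂ] WithLp 2 (H × H) :=
  (WithLp.linearEquiv 2 ℂ (H × H)).symm.toLinearMap ∘ₗ
    LinearMap.prod (Pb0 Zt) (Xt ∘ₗ Pb1 Zt)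

/-- The operator `σ_Z ⊗ 1` on `H⊕H`: `(v₀, v₁) ↦ (v₀, −v₁)`. -/
noncomputable def Zsig {H : Type*} [AddCommGroup H] [Module ℂ H] :
    WithLp 2 (H × H) →ₗ[ℂ] WithLp 2 (H × H) :=
  (WithLp.linearEquiv 2 ℂ (H × H)).symm.toLinearMap ∘ₗ
    LinearMap.prodMap (LinearMap.id : H →ₗ[ℂ] H) (-(LinearMap.id : H →ₗ[ℂ] H)) ∘ₗ
      (WithLp.linearEquiv 2 ℂ (H × H)).toLinearMap

/-- `V` is an isometry: `‖Vφ‖ = ‖φ‖`. -/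
theorem VL_norm_eq {H : Type*} [NormedAddCommGroup H]
    [InnerProductSpace ℂ H] [FiniteDimensional ℂ H]
    (Zt Xt : H →ₗ[ℂ] H) (hZt : Zt.IsSymmetric) (hZsq : Zt * Zt = 1)
    (hXt₁ : LinearMap.adjoint Xt * Xt = 1)
    (φ : H) : ‖VL Zt Xt φ‖ = ‖φ‖ := by
  have h2 : ∀ x : H, Zt (Zt x) = x := fun x => by
    have := LinearMap.ext_iff.mp hZsq x
    simpa [Module.End.mul_apply] using this
  have hX : ∀ a : H, (inner ℂ (Xt a) (Xt a) : ℂ) = inner ℂ a a := fun a => by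
    have h1 : LinearMap.adjoint Xt (Xt a) = a := by
      have := LinearMap.ext_iff.mp hXt₁ a
      simpa [Module.End.mul_apply] using this
    have := LinearMap.adjoint_inner_right Xt a (Xt a)
    rw [h1] at this
    exact this.symm
  have hinner : (inner ℂ (VL Zt Xt φ) (VL Zt Xt φ) : ℂ) = inner ℂ φ φ := by
    rw [WithLp.prod_inner_apply]
    have hfst : (VL Zt Xt φ).ofLp.1 = Pb0 Zt φ := rfl
    have hsnd : (VL Zt Xt φ).ofLp.2 = Xt (Pb1 Zt φ) := rfl
    rw [hfst, hsnd, hX]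
    have hZZ : (inner ℂ (Zt φ) (Zt φ) : ℂ) = inner ℂ φ φ := by
      rw [hZt φ (Zt φ), h2]
    simp only [Pb0, Pb1, LinearMap.smul_apply, LinearMap.add_apply, LinearMap.sub_apply,
      Module.End.one_apply, inner_smul_left, inner_smul_right, inner_add_left, inner_add_right,
      inner_sub_left, inner_sub_right, map_div₀, map_one, map_ofNat]
    rw [hZZ, hZt φ φ]
    ring
  rw [@norm_eq_sqrt_re_inner ℂ, @norm_eq_sqrt_re_inner ℂ, hinner]

/-- For every linear operator `Z` on `H` and every `ψ ∈ H`,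
`‖V Z ψ − (σ_Z ⊗ 1) V ψ‖ = ‖(Z − Z̃)ψ‖`. -/
theorem swap_isometry_Z_intertwine {H : Type*} [NormedAddCommGroup H]
    [InnerProductSpace ℂ H] [FiniteDimensional ℂ H]
    (Zt Xt : H →ₗ[ℂ] H) (hZt : Zt.IsSymmetric) (hZsq : Zt * Zt = 1)
    (hXt₁ : LinearMap.adjoint Xt * Xt = 1) (hXt₂ : Xt * LinearMap.adjoint Xt = 1)
    (Z : H →ₗ[ℂ] H) (ψ : H) :
    ‖VL Zt Xt (Z ψ) - Zsig (VL Zt Xt ψ)‖ = ‖(Z - Zt) ψ‖ := by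
  have h2 : ∀ x : H, Zt (Zt x) = x := fun x => by
    have := LinearMap.ext_iff.mp hZsq x
    simpa [Module.End.mul_apply] using this
  have heq : VL Zt Xt (Z ψ) - Zsig (VL Zt Xt ψ) = VL Zt Xt ((Z - Zt) ψ) := by
    apply (WithLp.equiv 2 (H × H)).injective
    apply Prod.ext
    · simp [VL, Zsig, Pb0, Pb1, h2, smul_add, smul_sub]
      module
    · simp [VL, Zsig, Pb0, Pb1, h2, smul_add, smul_sub, map_sub, map_add, map_smul]
      module
  rw [heq, VL_norm_eq Zt Xt hZt hZsq hXt₁]
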